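/- If Φ(y) = φ(y) e^{iθ(y)} with φ real-valued and θ(y) = (c/2)y − (1/4)∫_{-T}^y φ²(η)dη + const, then Φ satisfies −ωΦ − icΦ' + Φ'' + i|Φ|²Φ' = 0 if and only if φ satisfies −φ'' + (ω − c²/4)φ + (c/2)φ³ − (3/16)φ⁵ = 0. -/

import Mathlib

/-- With `Φ(y) = φ(y) e^{iθ(y)}`, `θ' = c/2 - φ²/4`, the equation
`-ωΦ - icΦ' + Φ'' + i|Φ|²Φ' = 0` holds iff
`-φ'' + (ω - c²/4)φ + (c/2)φ³ - (3/16)φ⁵ = 0` holds. -/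
theorem polar_reduction (c ω : ℝ) (φ θ : ℝ → ℝ) (Φ : ℝ → ℂ)
    (hφ : ContDiff ℝ 2 φ) (hθ : Differentiable ℝ θ)
    (hθ' : ∀ y, deriv θ y = c / 2 - φ y ^ 2 / 4)
    (hΦ : ∀ y, Φ y = (φ y : ℂ) * Complex.exp (Complex.I * (θ y : ℂ))) :
    (∀ y, -(ω : ℂ) * Φ y - Complex.I * (c : ℂ) * deriv Φ y + deriv (deriv Φ) y
        + Complex.I * (((‖Φ y‖ : ℝ) : ℂ)) ^ 2 * deriv Φ y = 0)
      ↔ (∀ y, -(deriv (deriv φ) y) + (ω - c ^ 2 / 4) * φ y + (c / 2) * φ y ^ 3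
          - (3 / 16) * φ y ^ 5 = 0) := by
  have hΦf : Φ = fun y => (φ y : ℂ) * Complex.exp (Complex.I * (θ y : ℂ)) := funext hΦ
  have hφd : Differentiable ℝ φ := hφ.differentiable (by norm_num)
  have hφ1 : ContDiff ℝ 1 (deriv φ) := by
    have h2 : ContDiff ℝ ((1 : ℕ∞) + 1) φ := by exact_mod_cast hφ
    rw [contDiff_succ_iff_deriv] at h2
    exact_mod_cast h2.2.2
  have hφ'd : Differentiable ℝ (deriv φ) := hφ1.differentiable one_ne_zero
  have hθy : ∀ y, HasDerivAt θ (c / 2 - φ y ^ 2 / 4) y := by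
    intro y
    have := (hθ y).hasDerivAt
    rwa [hθ' y] at this
  -- exp factor
  have hX : ∀ y, HasDerivAt (fun y => Complex.exp (Complex.I * (θ y : ℂ)))
      (Complex.exp (Complex.I * (θ y : ℂ)) * (Complex.I * ((c / 2 - φ y ^ 2 / 4 : ℝ) : ℂ))) y :=
    fun y => (((hθy y).ofReal_comp).const_mul Complex.I).cexp
  have hB : ∀ y, HasDerivAt (fun y => ((φ y : ℝ) : ℂ)) (((deriv φ y : ℝ) : ℂ)) y :=
    fun y => ((hφd y).hasDerivAt).ofReal_comp
  have hA : ∀ y, HasDerivAt (fun y => ((deriv φ y : ℝ) : ℂ)) (((deriv (deriv φ) y : ℝ) : ℂ)) y :=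
    fun y => ((hφ'd y).hasDerivAt).ofReal_comp
  have hψ : ∀ y, HasDerivAt (fun y => c / 2 - φ y ^ 2 / 4)
      (-((2 : ℕ) * φ y ^ (2 - 1) * deriv φ y / 4)) y :=
    fun y => (((hφd y).hasDerivAt.pow 2).div_const 4).const_sub (c / 2)
  have hψc : ∀ y, HasDerivAt (fun y => ((c / 2 - φ y ^ 2 / 4 : ℝ) : ℂ))
      ((-((2 : ℕ) * φ y ^ (2 - 1) * deriv φ y / 4) : ℝ) : ℂ) y :=
    fun y => (hψ y).ofReal_comp
  have hF : ∀ y, HasDerivAt Φ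
      (((deriv φ y : ℝ) : ℂ) * Complex.exp (Complex.I * (θ y : ℂ))
        + ((φ y : ℝ) : ℂ) * (Complex.exp (Complex.I * (θ y : ℂ))
            * (Complex.I * ((c / 2 - φ y ^ 2 / 4 : ℝ) : ℂ)))) y := by
    intro y
    rw [hΦf]
    exact (hB y).mul (hX y)
  have hderivΦ : deriv Φ = fun y =>
      ((deriv φ y : ℝ) : ℂ) * Complex.exp (Complex.I * (θ y : ℂ))
        + ((φ y : ℝ) : ℂ) * (Complex.exp (Complex.I * (θ y : ℂ))
            * (Complex.I * ((c / 2 - φ y ^ 2 / 4 : ℝ) : ℂ))) :=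
    funext fun y => (hF y).deriv
  have habs : ∀ y, ((‖Φ y‖ : ℝ) : ℂ) ^ 2 = ((φ y : ℝ) : ℂ) ^ 2 := by
    intro y
    rw [hΦ y, norm_mul, Complex.norm_real, Real.norm_eq_abs, Complex.norm_exp]
    have : (Complex.I * ((θ y : ℝ) : ℂ)).re = 0 := by simp
    rw [this, Real.exp_zero, mul_one, ← Complex.ofReal_pow, ← Complex.ofReal_pow, sq_abs]
  have key : ∀ y,
      -(ω : ℂ) * Φ y - Complex.I * (c : ℂ) * deriv Φ y + deriv (deriv Φ) y
        + Complex.I * (((‖Φ y‖ : ℝ) : ℂ)) ^ 2 * deriv Φ y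
      = -((-(deriv (deriv φ) y) + (ω - c ^ 2 / 4) * φ y + (c / 2) * φ y ^ 3
          - (3 / 16) * φ y ^ 5 : ℝ) : ℂ) * Complex.exp (Complex.I * (θ y : ℂ)) := by
    intro y
    have hG := ((hA y).mul (hX y)).add ((hB y).mul ((hX y).mul ((hψc y).const_mul Complex.I)))
    have h2d := hG.deriv
    simp only [Pi.add_def, Pi.mul_def] at h2d
    rw [habs y, hΦ y]
    simp only [hderivΦ]
    rw [h2d]
    push_cast
    ring_nf
    linear_combination (Complex.exp (Complex.I * (θ y : ℂ)) *
      ((-(c : ℂ) * (φ y) + (φ y : ℂ) * ((c : ℂ)/2 - (φ y : ℂ)^2/4) + (φ y : ℂ)^3)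
        * ((c : ℂ)/2 - (φ y : ℂ)^2/4))) * Complex.I_sq
  constructor
  · intro h y
    have h0 := h y
    rw [key y] at h0
    rcases mul_eq_zero.mp h0 with h1 | h1
    · exact_mod_cast neg_eq_zero.mp h1
    · exact absurd h1 (Complex.exp_ne_zero _)
  · intro h y
    rw [key y, h y]
    simp
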